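/- Let G be a planar graph and let H be a subgraph of F(G) whose vertices x_1, …, x_k (k ≥ 2) correspond to k pairwise vertex-disjoint edges of G. Then G contains a subgraph isomorphic to H □ K_2 in which each x_i corresponds to an edge between the two copies of H. -/

import Mathlib

open SimpleGraph

variable {V : Type*}

/-- Four distinct vertices forming a 4-cycle in `G`. -/
def IsC4 (G : SimpleGraph V) (a b c d : V) : Prop :=
  a ≠ b ∧ a ≠ c ∧ a ≠ d ∧ b ≠ c ∧ b ≠ d ∧ c ≠ d ∧
    G.Adj a b ∧ G.Adj b c ∧ G.Adj c d ∧ G.Adj d a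

/-- A proper edge coloring of `G` in which every 4-cycle is rainbow. -/
def IsBColoring (G : SimpleGraph V) {α : Type*} (C : Sym2 V → α) : Prop :=
  (∀ a b c : V, G.Adj a b → G.Adj a c → b ≠ c → C s(a, b) ≠ C s(a, c)) ∧
  (∀ a b c d : V, IsC4 G a b c d →
    C s(a, b) ≠ C s(b, c) ∧ C s(a, b) ≠ C s(c, d) ∧ C s(a, b) ≠ C s(d, a) ∧
    C s(b, c) ≠ C s(c, d) ∧ C s(b, c) ≠ C s(d, a) ∧ C s(c, d) ≠ C s(d, a))

/-- The minimum number of colors in a B-coloring of `G`. -/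
noncomputable def qB (G : SimpleGraph V) : ℕ :=
  sInf {n | ∃ C : Sym2 V → Fin n, IsBColoring G C}

/-- `e` and `f` are opposite edges of some 4-cycle of `G`. -/
def OppC4 (G : SimpleGraph V) (e f : Sym2 V) : Prop :=
  ∃ a b c d : V, IsC4 G a b c d ∧ e = s(a, b) ∧ f = s(c, d)

/-- Two edges (as unordered pairs) share no vertex. -/
def EdgeDisjoint (e f : Sym2 V) : Prop := ∀ v : V, v ∈ e → v ∉ f

/-- The graph `F(G)` on the edges of `G`: two vertex-disjoint edges are adjacent
iff they are opposite edges of a 4-cycle of `G`. -/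
def Fgraph (G : SimpleGraph V) : SimpleGraph G.edgeSet :=
  SimpleGraph.fromRel fun e f =>
    EdgeDisjoint (e : Sym2 V) (f : Sym2 V) ∧ OppC4 G (e : Sym2 V) (f : Sym2 V)

/-- The extended line graph `L⁺(G)`: edges of `G` are adjacent if they share an
endpoint or are opposite edges of a 4-cycle of `G`. -/
def Lplus (G : SimpleGraph V) : SimpleGraph G.edgeSet :=
  SimpleGraph.fromRel fun e f =>
    (∃ v : V, v ∈ (e : Sym2 V) ∧ v ∈ (f : Sym2 V)) ∨ OppC4 G (e : Sym2 V) (f : Sym2 V)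

/-- `H` is a minor of `G`, via branch sets. -/
def HasMinor {W : Type*} (G : SimpleGraph V) (H : SimpleGraph W) : Prop :=
  ∃ B : W → Set V,
    (∀ w, (G.induce (B w)).Connected) ∧
    (∀ w₁ w₂, w₁ ≠ w₂ → Disjoint (B w₁) (B w₂)) ∧
    (∀ w₁ w₂, H.Adj w₁ w₂ → ∃ v₁ ∈ B w₁, ∃ v₂ ∈ B w₂, G.Adj v₁ v₂)

/-- Planarity via Wagner's theorem: no `K₅` minor and no `K₃,₃` minor. -/
def IsPlanar (G : SimpleGraph V) : Prop :=
  ¬ HasMinor G (completeGraph (Fin 5)) ∧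
    ¬ HasMinor G (completeBipartiteGraph (Fin 3) (Fin 3))

/-- Outerplanarity: no `K₄` minor and no `K₂,₃` minor. -/
def IsOuterplanar (G : SimpleGraph V) : Prop :=
  ¬ HasMinor G (completeGraph (Fin 4)) ∧
    ¬ HasMinor G (completeBipartiteGraph (Fin 2) (Fin 3))

/-- `G` is 2-connected: at least 3 vertices and removing any vertex leaves it connected. -/
def IsTwoConnected (G : SimpleGraph V) : Prop :=
  3 ≤ Nat.card V ∧ ∀ v : V, (G.induce {u | u ≠ v}).Connected

/-- `K₄` minus one edge, on `Fin 4` (the edge between `2` and `3` removed). -/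
def K4e : SimpleGraph (Fin 4) :=
  SimpleGraph.fromRel fun x y => s(x, y) ≠ s((2 : Fin 4), (3 : Fin 4))

/-- The chromatic index: minimum number of colors in a proper edge coloring. -/
noncomputable def chromIndex (G : SimpleGraph V) : ℕ :=
  sInf {n | ∃ C : Sym2 V → Fin n,
    ∀ a b c : V, G.Adj a b → G.Adj a c → b ≠ c → C s(a, b) ≠ C s(a, c)}

/-- `K₆` minus a perfect matching, on `Fin 6` (the matching `01, 23, 45` removed). -/
def K6mM : SimpleGraph (Fin 6) :=
  SimpleGraph.fromRel fun x y => (x : ℕ) / 2 ≠ (y : ℕ) / 2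

/-- A path `v₀v₁v₂v₃` together with a vertex `4` adjacent to all four path vertices. -/
def FanGraph : SimpleGraph (Fin 5) :=
  SimpleGraph.fromRel fun x y =>
    ((x : ℕ) + 1 = (y : ℕ) ∧ (y : ℕ) ≤ 3) ∨ (x : ℕ) = 4



section PrismAux

lemma aux_selector {α : Type*} (f : α → α) (hinv : ∀ a, f (f a) = a)
    (hnf : ∀ a, f a ≠ a) : ∃ p : α → Bool, ∀ a, p (f a) = !(p a) := by
  classical
  let S : Setoid α := ⟨fun a b => a = b ∨ a = f b, by
    constructor
    · exact fun a => Or.inl rfl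
    · rintro a b (rfl | rfl)
      · exact Or.inl rfl
      · exact Or.inr (hinv b).symm
    · rintro a b c (rfl | rfl) (h | h)
      · exact Or.inl h
      · exact Or.inr h
      · exact Or.inr (h ▸ rfl)
      · exact Or.inl (by rw [h, hinv])⟩
  refine ⟨fun a => decide (a = (Quotient.mk S a).out), fun a => ?_⟩
  have hq : Quotient.mk S (f a) = Quotient.mk S a := Quotient.sound (Or.inr rfl)
  have horb : (Quotient.mk S a).out = a ∨ (Quotient.mk S a).out = f a :=
    Quotient.exact (Quotient.out_eq (Quotient.mk S a))
  simp only [hq]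
  rcases horb with h | h
  · simp only [h]
    have h1 : f a ≠ a := hnf a
    simp [h1]
  · simp only [h]
    have h1 : a ≠ f a := fun hh => hnf a hh.symm
    simp [h1]

lemma aux_chain_of_rtg {α : Type*} {R : α → α → Prop} {x y : α}
    (h : Relation.ReflTransGen R x y) :
    ∃ n : ℕ, ∃ c : ℕ → α, c 0 = x ∧ c n = y ∧ ∀ l < n, R (c l) (c (l + 1)) := by
  induction h with
  | refl => exact ⟨0, fun _ => x, rfl, rfl, by omega⟩
  | @tail b z hab hbc ih =>
    obtain ⟨n, c, hc0, hcn, hstep⟩ := ih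
    refine ⟨n + 1, fun l => if l ≤ n then c l else z, by simp [hc0], by simp, ?_⟩
    intro l hl
    rcases Nat.lt_or_ge l n with h1 | h1
    · simpa [Nat.le_of_lt h1, Nat.succ_le_of_lt h1] using hstep l h1
    · have : l = n := by omega
      subst this
      simpa [hcn] using hbc

lemma aux_splice {α : Type*} (R : α → α → Prop) (c : ℕ → α) (n a b : ℕ)
    (hab : a ≤ b) (hbn : b ≤ n) (hc : c a = c b)
    (hstep : ∀ l < n, R (c l) (c (l + 1))) :
    ∃ c' : ℕ → α, c' 0 = c 0 ∧ c' (n - (b - a)) = c n ∧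
      ∀ l < n - (b - a), R (c' l) (c' (l + 1)) := by
  refine ⟨fun l => if l ≤ a then c l else c (l + (b - a)), by simp, ?_, ?_⟩
  · show (if n - (b - a) ≤ a then c (n - (b - a)) else c (n - (b - a) + (b - a))) = c n
    rcases Nat.lt_or_ge a (n - (b - a)) with h1 | h1
    · rw [if_neg (by omega)]
      congr 1
      omega
    · have h2 : n - (b - a) = a ∧ b = n := by omega
      rw [if_pos (le_of_eq h2.1), h2.1, hc, h2.2]
  · intro l hl
    show R (if l ≤ a then c l else c (l + (b - a)))
        (if l + 1 ≤ a then c (l + 1) else c (l + 1 + (b - a)))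
    rcases Nat.lt_or_ge l a with h1 | h1
    · rw [if_pos (by omega : l ≤ a), if_pos (by omega : l + 1 ≤ a)]
      exact hstep l (by omega)
    · rcases Nat.eq_or_lt_of_le h1 with h2 | h2
      · have heq : l + 1 + (b - a) = b + 1 := by omega
        rw [if_pos (by omega : l ≤ a), if_neg (by omega), heq]
        have hcl : c l = c b := by rw [← h2, hc]
        rw [hcl]
        exact hstep b (by omega)
      · have heq : l + 1 + (b - a) = (l + (b - a)) + 1 := by omega
        rw [if_neg (by omega), if_neg (by omega), heq]
        exact hstep _ (by omega)

lemma aux_induce_singleton {W : Type*} (G : SimpleGraph W) (x : W) :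
    (G.induce {x}).Connected := by
  have : Nonempty ({x} : Set W) := ⟨⟨x, rfl⟩⟩
  refine ⟨fun a b => ?_⟩
  have : a = b := Subtype.ext (by
    have ha := a.2; have hb := b.2
    simp only [Set.mem_singleton_iff] at ha hb
    rw [ha, hb])
  exact this ▸ Reachable.refl a

lemma aux_induce_chain {W : Type*} (G : SimpleGraph W) (f : ℕ → W) (a b : ℕ)
    (hab : a ≤ b) (hadj : ∀ l, a ≤ l → l < b → G.Adj (f l) (f (l + 1))) :
    (G.induce (f '' Set.Icc a b)).Connected := by
  have hmem : ∀ l, a ≤ l → l ≤ b → f l ∈ f '' Set.Icc a b :=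
    fun l h1 h2 => ⟨l, ⟨h1, h2⟩, rfl⟩
  have key : ∀ l (hl : a ≤ l) (hlb : l ≤ b),
      (G.induce (f '' Set.Icc a b)).Reachable ⟨f l, hmem l hl hlb⟩ ⟨f a, hmem a le_rfl hab⟩ := by
    intro l hl
    induction l, hl using Nat.le_induction with
    | base => intro _; rfl
    | succ m hm ih =>
      intro hmb
      have hmb' : m ≤ b := le_trans (Nat.le_succ m) hmb
      have hadj2 : (G.induce (f '' Set.Icc a b)).Adj
          ⟨f (m + 1), hmem _ (le_trans hm (Nat.le_succ m)) hmb⟩ ⟨f m, hmem _ hm hmb'⟩ :=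
        (hadj m hm (Nat.lt_of_succ_le hmb)).symm
      exact (hadj2.reachable).trans (ih hmb')
  have : Nonempty (f '' Set.Icc a b : Set W) := ⟨⟨f a, hmem a le_rfl hab⟩⟩
  refine ⟨?_⟩
  rintro ⟨x, hx⟩ ⟨y, hy⟩
  obtain ⟨l, hl, rfl⟩ := hx
  obtain ⟨m, hm, rfl⟩ := hy
  exact (key l hl.1 hl.2).trans (key m hm.1 hm.2).symm

/-- The endpoint of the `i`-th edge selected by the boolean `s`. -/
def ptAux {W : Type*} {k : ℕ} (u0 v0 : Fin k → W) (i : Fin k) (s : Bool) : W :=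
  if s then u0 i else v0 i

/-- The two orientations `s` of edge `i` and `t` of edge `j` are compatible. -/
def GoodAux {W : Type*} {k : ℕ} (G : SimpleGraph W) (u0 v0 : Fin k → W)
    (i j : Fin k) (s t : Bool) : Prop :=
  G.Adj (ptAux u0 v0 i s) (ptAux u0 v0 j t) ∧
    G.Adj (ptAux u0 v0 i (!s)) (ptAux u0 v0 j (!t))

/-- A forced (constrained) transition between oriented edges. -/
def StepAux {W : Type*} {k : ℕ} (G : SimpleGraph W) (H : SimpleGraph (Fin k))
    (u0 v0 : Fin k → W) (x y : Fin k × Bool) : Prop :=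
  H.Adj x.1 y.1 ∧ GoodAux G u0 v0 x.1 y.1 x.2 y.2 ∧ ¬ GoodAux G u0 v0 x.1 y.1 x.2 (!y.2)

lemma goodSymm {W : Type*} {k : ℕ} (G : SimpleGraph W) (u0 v0 : Fin k → W)
    (i j : Fin k) (s t : Bool) :
    GoodAux G u0 v0 i j s t ↔ GoodAux G u0 v0 j i t s :=
  and_congr ⟨Adj.symm, Adj.symm⟩ ⟨Adj.symm, Adj.symm⟩

lemma goodFlip {W : Type*} {k : ℕ} (G : SimpleGraph W) (u0 v0 : Fin k → W)
    (i j : Fin k) (s t : Bool) :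
    GoodAux G u0 v0 i j (!s) t ↔ GoodAux G u0 v0 i j s (!t) := by
  unfold GoodAux
  rw [Bool.not_not, Bool.not_not, and_comm]

lemma goodNotNot {W : Type*} {k : ℕ} (G : SimpleGraph W) (u0 v0 : Fin k → W)
    (i j : Fin k) (s t : Bool) :
    GoodAux G u0 v0 i j (!s) (!t) ↔ GoodAux G u0 v0 i j s t := by
  rw [goodFlip, Bool.not_not]

/-- An odd closed chain of forced transitions would give a Möbius ladder in `G`,
hence a `K₃,₃` minor. -/
lemma noChain {W : Type*} {k : ℕ} (G : SimpleGraph W) (H : SimpleGraph (Fin k))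
    (u0 v0 : Fin k → W)
    (hadj0 : ∀ i, G.Adj (u0 i) (v0 i))
    (hptdisj : ∀ i j : Fin k, i ≠ j → ∀ s t : Bool, ptAux u0 v0 i s ≠ ptAux u0 v0 j t)
    (hK33 : ¬ HasMinor G (completeBipartiteGraph (Fin 3) (Fin 3))) :
    ∀ n : ℕ, ∀ c : ℕ → Fin k × Bool, ∀ i : Fin k, ∀ s : Bool,
      c 0 = (i, s) → c n = (i, !s) →
      (∀ l < n, StepAux G H u0 v0 (c l) (c (l + 1))) → False := by
  have hadjpt : ∀ (j : Fin k) (t : Bool),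
      G.Adj (ptAux u0 v0 j t) (ptAux u0 v0 j (!t)) := by
    intro j t
    cases t
    · simpa [ptAux] using (hadj0 j).symm
    · simpa [ptAux] using hadj0 j
  intro n
  induction n using Nat.strong_induction_on with
  | _ n IH =>
  intro c i s h0 hn hstep
  have hne0 : n ≠ 0 := by
    rintro rfl
    rw [h0] at hn
    have : s = !s := congrArg Prod.snd hn
    simp at this
  rcases Nat.lt_or_ge n 3 with h3 | h3
  · -- n = 0, 1 or 2
    interval_cases n
    · exact hne0 rfl
    · -- n = 1
      have h := hstep 0 (by omega)
      rw [h0, hn] at h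
      exact H.loopless.irrefl i h.1
    · -- n = 2
      have h01 := hstep 0 (by omega)
      have h12 := hstep 1 (by omega)
      rcases hc1 : c 1 with ⟨j, t⟩
      rw [h0, hc1] at h01
      rw [hc1, hn] at h12
      exact h01.2.2 ((goodFlip G u0 v0 i j s t).mp ((goodSymm G u0 v0 j i t (!s)).mp h12.2.1))
  · -- main case : n ≥ 3
    have hD : ∀ a b, a < b → b ≤ n → ¬(a = 0 ∧ b = n) → (c a).1 ≠ (c b).1 := by
      intro a b hab hbn hnotend heq
      by_cases ht : (c b).2 = (c a).2
      · have hcab : c a = c b := Prod.ext heq ht.symm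
        obtain ⟨c', h0', hn', hs'⟩ :=
          aux_splice (StepAux G H u0 v0) c n a b (le_of_lt hab) hbn hcab hstep
        exact IH (n - (b - a)) (by omega) c' i s (h0'.trans h0) (hn'.trans hn) hs'
      · have ht' : (c b).2 = !(c a).2 := by
          cases hca : (c a).2 <;> cases hcb : (c b).2 <;> simp_all
        refine IH (b - a) (by omega) (fun l => c (a + l)) (c a).1 (c a).2 ?_ ?_ ?_
        · show c (a + 0) = _
          rw [Nat.add_zero]
        · show c (a + (b - a)) = _
          rw [show a + (b - a) = b by omega, Prod.ext_iff]
          exact ⟨heq.symm, ht'⟩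
        · intro l hl
          show StepAux G H u0 v0 (c (a + l)) (c (a + (l + 1)))
          rw [show a + (l + 1) = (a + l) + 1 by omega]
          exact hstep (a + l) (by omega)
    set A : ℕ → W := fun l => ptAux u0 v0 (c l).1 (c l).2 with hA
    set Bf : ℕ → W := fun l => ptAux u0 v0 (c l).1 (!(c l).2) with hBf
    have hlad : ∀ l, l < n → G.Adj (A l) (A (l + 1)) ∧ G.Adj (Bf l) (Bf (l + 1)) :=
      fun l hl => (hstep l hl).2.1
    have hrung : ∀ l, G.Adj (A l) (Bf l) := fun l => hadjpt (c l).1 (c l).2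
    have hAnB : A n = Bf 0 := by
      show ptAux u0 v0 (c n).1 (c n).2 = ptAux u0 v0 (c 0).1 (!(c 0).2)
      rw [hn, h0]
    have hBnA : Bf n = A 0 := by
      show ptAux u0 v0 (c n).1 (!(c n).2) = ptAux u0 v0 (c 0).1 (c 0).2
      rw [hn, h0]
      show ptAux u0 v0 i (!(!s)) = ptAux u0 v0 i s
      rw [Bool.not_not]
    have hcross1 : G.Adj (A (n - 1)) (Bf 0) := by
      have h := (hlad (n - 1) (by omega)).1
      rwa [show n - 1 + 1 = n by omega, hAnB] at h
    have hcross2 : G.Adj (Bf (n - 1)) (A 0) := by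
      have h := (hlad (n - 1) (by omega)).2
      rwa [show n - 1 + 1 = n by omega, hBnA] at h
    have hfst : ∀ a b : ℕ, a ≤ n - 1 → b ≤ n - 1 → a ≠ b → (c a).1 ≠ (c b).1 := by
      intro a b ha hb hab
      rcases Nat.lt_or_ge a b with h | h
      · exact hD a b h (by omega) (by omega)
      · exact (hD b a (by omega) (by omega) (by omega)).symm
    have hABne : ∀ a b : ℕ, a ≤ n - 1 → b ≤ n - 1 → A a ≠ Bf b := by
      intro a b ha hb
      by_cases hab : a = b
      · subst hab
        exact (hrung a).ne
      · exact hptdisj _ _ (hfst a b ha hb hab) _ _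
    have hAAne : ∀ a b : ℕ, a ≤ n - 1 → b ≤ n - 1 → a ≠ b → A a ≠ A b := by
      intro a b ha hb hab
      exact hptdisj _ _ (hfst a b ha hb hab) _ _
    have hBBne : ∀ a b : ℕ, a ≤ n - 1 → b ≤ n - 1 → a ≠ b → Bf a ≠ Bf b := by
      intro a b ha hb hab
      exact hptdisj _ _ (hfst a b ha hb hab) _ _
    apply hK33
    refine ⟨Sum.elim ![{A 0}, {Bf 1}, A '' Set.Icc 2 (n - 1)]
      ![{Bf 0}, {A 1}, Bf '' Set.Icc 2 (n - 1)], ?_, ?_, ?_⟩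
    · rintro (x | x) <;> fin_cases x <;>
        simp only [Sum.elim_inl, Sum.elim_inr, Matrix.cons_val_zero, Matrix.cons_val_one,
          Matrix.head_cons, Matrix.cons_val_two, Matrix.tail_cons]
      · exact aux_induce_singleton G (A 0)
      · exact aux_induce_singleton G (Bf 1)
      · exact aux_induce_chain G A 2 (n - 1) (by omega)
          (fun l h1 h2 => (hlad l (by omega)).1)
      · exact aux_induce_singleton G (Bf 0)
      · exact aux_induce_singleton G (A 1)
      · exact aux_induce_chain G Bf 2 (n - 1) (by omega)
          (fun l h1 h2 => (hlad l (by omega)).2)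
    · -- disjointness
      have hsi : ∀ (x : W) (f : ℕ → W), (∀ l, 2 ≤ l → l ≤ n - 1 → x ≠ f l) →
          Disjoint ({x} : Set W) (f '' Set.Icc 2 (n - 1)) := by
        intro x f hx
        rw [Set.disjoint_singleton_left]
        rintro ⟨l, hl, heq⟩
        exact hx l hl.1 hl.2 heq.symm
      have d1 : Disjoint ({A 0} : Set W) {Bf 1} :=
        Set.disjoint_singleton.mpr (hABne 0 1 (by omega) (by omega))
      have d2 : Disjoint ({A 0} : Set W) (A '' Set.Icc 2 (n - 1)) :=
        hsi _ _ (fun l h1 h2 => hAAne 0 l (by omega) h2 (by omega))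
      have d3 : Disjoint ({A 0} : Set W) {Bf 0} :=
        Set.disjoint_singleton.mpr (hABne 0 0 (by omega) (by omega))
      have d4 : Disjoint ({A 0} : Set W) {A 1} :=
        Set.disjoint_singleton.mpr (hAAne 0 1 (by omega) (by omega) (by omega))
      have d5 : Disjoint ({A 0} : Set W) (Bf '' Set.Icc 2 (n - 1)) :=
        hsi _ _ (fun l h1 h2 => hABne 0 l (by omega) h2)
      have d6 : Disjoint ({Bf 1} : Set W) (A '' Set.Icc 2 (n - 1)) :=
        hsi _ _ (fun l h1 h2 => (hABne l 1 h2 (by omega)).symm)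
      have d7 : Disjoint ({Bf 1} : Set W) {Bf 0} :=
        Set.disjoint_singleton.mpr (hBBne 1 0 (by omega) (by omega) (by omega))
      have d8 : Disjoint ({Bf 1} : Set W) {A 1} :=
        Set.disjoint_singleton.mpr (hABne 1 1 (by omega) (by omega)).symm
      have d9 : Disjoint ({Bf 1} : Set W) (Bf '' Set.Icc 2 (n - 1)) :=
        hsi _ _ (fun l h1 h2 => hBBne 1 l (by omega) h2 (by omega))
      have d10 : Disjoint (A '' Set.Icc 2 (n - 1)) ({Bf 0} : Set W) :=
        (hsi _ _ (fun l h1 h2 => (hABne l 0 h2 (by omega)).symm)).symm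
      have d11 : Disjoint (A '' Set.Icc 2 (n - 1)) ({A 1} : Set W) :=
        (hsi _ _ (fun l h1 h2 => hAAne 1 l (by omega) h2 (by omega))).symm
      have d12 : Disjoint (A '' Set.Icc 2 (n - 1)) (Bf '' Set.Icc 2 (n - 1)) := by
        rw [Set.disjoint_left]
        rintro v ⟨l, hl, rfl⟩ ⟨m, hm, heq⟩
        exact hABne l m hl.2 hm.2 heq.symm
      have d13 : Disjoint ({Bf 0} : Set W) {A 1} :=
        Set.disjoint_singleton.mpr (hABne 1 0 (by omega) (by omega)).symm
      have d14 : Disjoint ({Bf 0} : Set W) (Bf '' Set.Icc 2 (n - 1)) :=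
        hsi _ _ (fun l h1 h2 => hBBne 0 l (by omega) h2 (by omega))
      have d15 : Disjoint ({A 1} : Set W) (Bf '' Set.Icc 2 (n - 1)) :=
        hsi _ _ (fun l h1 h2 => hABne 1 l (by omega) h2)
      intro w1 w2 hne
      rcases w1 with x | x <;> rcases w2 with y | y <;> fin_cases x <;> fin_cases y <;>
        simp only [Sum.elim_inl, Sum.elim_inr, Matrix.cons_val_zero, Matrix.cons_val_one,
          Matrix.head_cons, Matrix.cons_val_two, Matrix.tail_cons] <;>
        first
        | exact absurd rfl hne
        | exact d1 | exact d1.symm | exact d2 | exact d2.symm | exact d3 | exact d3.symm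
        | exact d4 | exact d4.symm | exact d5 | exact d5.symm | exact d6 | exact d6.symm
        | exact d7 | exact d7.symm | exact d8 | exact d8.symm | exact d9 | exact d9.symm
        | exact d10 | exact d10.symm | exact d11 | exact d11.symm | exact d12 | exact d12.symm
        | exact d13 | exact d13.symm | exact d14 | exact d14.symm | exact d15 | exact d15.symm
    · -- adjacency
      have h2mem : (2 : ℕ) ∈ Set.Icc 2 (n - 1) := ⟨le_rfl, by omega⟩
      have hn1mem : n - 1 ∈ Set.Icc 2 (n - 1) := ⟨by omega, le_rfl⟩
      have key : ∀ x y : Fin 3,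
          ∃ v₁ ∈ Sum.elim ![{A 0}, {Bf 1}, A '' Set.Icc 2 (n - 1)]
            ![({Bf 0} : Set W), {A 1}, Bf '' Set.Icc 2 (n - 1)] (Sum.inl x),
          ∃ v₂ ∈ Sum.elim ![({A 0} : Set W), {Bf 1}, A '' Set.Icc 2 (n - 1)]
            ![{Bf 0}, {A 1}, Bf '' Set.Icc 2 (n - 1)] (Sum.inr y), G.Adj v₁ v₂ := by
        intro x y
        fin_cases x <;> fin_cases y <;>
          simp only [Sum.elim_inl, Sum.elim_inr, Matrix.cons_val_zero, Matrix.cons_val_one,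
            Matrix.head_cons, Matrix.cons_val_two, Matrix.tail_cons]
        · exact ⟨A 0, rfl, Bf 0, rfl, hrung 0⟩
        · exact ⟨A 0, rfl, A 1, rfl, (hlad 0 (by omega)).1⟩
        · exact ⟨A 0, rfl, Bf (n - 1), ⟨n - 1, hn1mem, rfl⟩, hcross2.symm⟩
        · exact ⟨Bf 1, rfl, Bf 0, rfl, (hlad 0 (by omega)).2.symm⟩
        · exact ⟨Bf 1, rfl, A 1, rfl, (hrung 1).symm⟩
        · exact ⟨Bf 1, rfl, Bf 2, ⟨2, h2mem, rfl⟩, (hlad 1 (by omega)).2⟩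
        · exact ⟨A (n - 1), ⟨n - 1, hn1mem, rfl⟩, Bf 0, rfl, hcross1⟩
        · exact ⟨A 2, ⟨2, h2mem, rfl⟩, A 1, rfl, ((hlad 1 (by omega)).1).symm⟩
        · exact ⟨A 2, ⟨2, h2mem, rfl⟩, Bf 2, ⟨2, h2mem, rfl⟩, hrung 2⟩
      rintro (x | x) (y | y) hadj
      · simp [completeBipartiteGraph] at hadj
      · exact key x y
      · obtain ⟨v₁, h1, v₂, h2, ha⟩ := key y x
        exact ⟨v₂, h2, v₁, h1, ha.symm⟩
      · simp [completeBipartiteGraph] at hadj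

end PrismAux

theorem prismHK2_of_subgraph_in_Fgraph {V : Type*} [Fintype V] (G : SimpleGraph V)
    (hG : IsPlanar G) (k : ℕ) (hk : 2 ≤ k) (H : SimpleGraph (Fin k))
    (e : Fin k → Sym2 V) (he : ∀ i, e i ∈ G.edgeSet)
    (hdisj : ∀ i j, i ≠ j → EdgeDisjoint (e i) (e j))
    (hopp : ∀ i j, H.Adj i j → OppC4 G (e i) (e j)) :
    ∃ u v : Fin k → V,
      Function.Injective (Sum.elim u v) ∧
      (∀ i, e i = s(u i, v i)) ∧
      (∀ i, G.Adj (u i) (v i)) ∧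
      (∀ i j, H.Adj i j → G.Adj (u i) (u j) ∧ G.Adj (v i) (v j)) := by
  classical
  have hexi : ∀ i, ∃ a b : V, e i = s(a, b) := fun i => by
    obtain ⟨⟨a, b⟩, h⟩ := Quot.exists_rep (e i)
    exact ⟨a, b, h.symm⟩
  choose u0 v0 he' using hexi
  have hadj0 : ∀ i, G.Adj (u0 i) (v0 i) := fun i => G.mem_edgeSet.mp (he' i ▸ he i)
  have hptmem : ∀ i s, ptAux u0 v0 i s ∈ e i := by
    intro i s
    rw [he' i]
    cases s <;> simp [ptAux]
  have hptdisj : ∀ i j, i ≠ j → ∀ s t, ptAux u0 v0 i s ≠ ptAux u0 v0 j t := by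
    intro i j hij s t heq
    exact hdisj i j hij _ (hptmem i s) (by rw [heq]; exact hptmem j t)
  have hadjpt : ∀ (j : Fin k) (t : Bool),
      G.Adj (ptAux u0 v0 j t) (ptAux u0 v0 j (!t)) := by
    intro j t
    cases t
    · simpa [ptAux] using (hadj0 j).symm
    · simpa [ptAux] using hadj0 j
  have hPQ : ∀ i j, H.Adj i j →
      GoodAux G u0 v0 i j true true ∨ GoodAux G u0 v0 i j true false := by
    intro i j hij
    obtain ⟨a, b, cc, d, hc4, hei, hej⟩ := hopp i j hij
    obtain ⟨-, -, -, -, -, -, hab, hbc, hcd, hda⟩ := hc4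
    have h1 : (u0 i = a ∧ v0 i = b) ∨ (u0 i = b ∧ v0 i = a) := by
      have h := (he' i).symm.trans hei
      rwa [Sym2.eq_iff] at h
    have h2 : (u0 j = cc ∧ v0 j = d) ∨ (u0 j = d ∧ v0 j = cc) := by
      have h := (he' j).symm.trans hej
      rwa [Sym2.eq_iff] at h
    rcases h1 with ⟨hu, hv⟩ | ⟨hu, hv⟩ <;> rcases h2 with ⟨hu', hv'⟩ | ⟨hu', hv'⟩
    · right
      refine ⟨?_, ?_⟩ <;> simp only [GoodAux, ptAux, if_true, if_false, Bool.not_true,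
        Bool.not_false, hu, hv, hu', hv']
      · exact hda.symm
      · exact hbc
    · left
      refine ⟨?_, ?_⟩ <;> simp only [GoodAux, ptAux, if_true, if_false, Bool.not_true,
        Bool.not_false, hu, hv, hu', hv']
      · exact hda.symm
      · exact hbc
    · left
      refine ⟨?_, ?_⟩ <;> simp only [GoodAux, ptAux, if_true, if_false, Bool.not_true,
        Bool.not_false, hu, hv, hu', hv']
      · exact hbc
      · exact hda.symm
    · right
      refine ⟨?_, ?_⟩ <;> simp only [GoodAux, ptAux, if_true, if_false, Bool.not_true,
        Bool.not_false, hu, hv, hu', hv']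
      · exact hbc
      · exact hda.symm
  -- construct the orientation σ
  have claim : ∀ (i : Fin k) (s : Bool),
      ¬ Relation.ReflTransGen (StepAux G H u0 v0) (i, s) (i, !s) := by
    intro i s hr
    obtain ⟨n, cc, h0, hn, hstep⟩ := aux_chain_of_rtg hr
    exact noChain G H u0 v0 hadj0 hptdisj hG.2 n cc i s h0 hn hstep
  obtain ⟨σ, hσ⟩ : ∃ σ : Fin k → Bool,
      ∀ i j, H.Adj i j → GoodAux G u0 v0 i j (σ i) (σ j) := by
    set R := StepAux G H u0 v0 with hR
    have hRflip : ∀ x y, R x y → R (x.1, !x.2) (y.1, !y.2) := by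
      rintro ⟨i1, s1⟩ ⟨j1, t1⟩ ⟨h1, h2, h3⟩
      refine ⟨h1, (goodNotNot G u0 v0 i1 j1 s1 t1).mpr h2, fun hg => h3 ?_⟩
      have hg' : GoodAux G u0 v0 i1 j1 (!s1) t1 := by simpa using hg
      exact (goodFlip G u0 v0 i1 j1 s1 t1).mp hg'
    have hRsymm : Symmetric R := by
      rintro ⟨i1, s1⟩ ⟨j1, t1⟩ ⟨h1, h2, h3⟩
      refine ⟨h1.symm, (goodSymm G u0 v0 i1 j1 s1 t1).mp h2, fun hg => h3 ?_⟩
      exact (goodFlip G u0 v0 i1 j1 s1 t1).mp ((goodSymm G u0 v0 j1 i1 t1 (!s1)).mp hg)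
    have hRtsymm : Symmetric (Relation.ReflTransGen R) :=
      by haveI : Std.Symm R := ⟨fun a b h => hRsymm h⟩; exact fun a b h => Std.Symm.symm a b h
    let S : Setoid (Fin k × Bool) :=
      ⟨Relation.ReflTransGen R,
        fun _ => Relation.ReflTransGen.refl, fun h => hRtsymm h, fun h1 h2 => h1.trans h2⟩
    let F : Fin k × Bool → Fin k × Bool := fun x => (x.1, !x.2)
    let f : Quotient S → Quotient S :=
      Quotient.map F (fun x y h => Relation.ReflTransGen.lift F (hRflip) _ _ h)
    have hfmk : ∀ x, f (Quotient.mk S x) = Quotient.mk S (F x) := fun x => rfl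
    have finv : ∀ q, f (f q) = q := by
      intro q
      induction q using Quotient.inductionOn with
      | h x =>
        rw [hfmk, hfmk]
        congr 1
        simp [F]
    have fnofix : ∀ q, f q ≠ q := by
      intro q
      induction q using Quotient.inductionOn with
      | h x =>
        rw [hfmk]
        intro hq
        have hr : Relation.ReflTransGen R (x.1, !x.2) (x.1, x.2) := Quotient.exact hq
        exact claim x.1 (!x.2) (by rwa [Bool.not_not])
    obtain ⟨p, hp⟩ := aux_selector f finv fnofix
    set σ : Fin k → Bool := fun i => p (Quotient.mk S (i, true)) with hσdef
    refine ⟨σ, fun i j hij => ?_⟩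
    have gSame : GoodAux G u0 v0 i j true true → ∀ s, GoodAux G u0 v0 i j s s := by
      intro h s
      cases s
      · simpa using (goodNotNot G u0 v0 i j true true).mpr h
      · exact h
    have gDiff : GoodAux G u0 v0 i j true false → ∀ s, GoodAux G u0 v0 i j s (!s) := by
      intro h s
      cases s
      · simpa using (goodNotNot G u0 v0 i j true false).mpr h
      · simpa using h
    by_cases hP : GoodAux G u0 v0 i j true true <;>
      by_cases hQ : GoodAux G u0 v0 i j true false
    · by_cases hσ : σ i = σ j
      · rw [← hσ]; exact gSame hP (σ i)
      · have hσ' : σ j = !(σ i) := by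
          cases h1 : σ i <;> cases h2 : σ j <;> simp_all
        rw [hσ']; exact gDiff hQ (σ i)
    · have hstep : R (i, true) (j, true) := by
        refine ⟨hij, hP, fun hg => hQ ?_⟩
        simpa using hg
      have hmk : Quotient.mk S (i, true) = Quotient.mk S (j, true) :=
        Quotient.sound (Relation.ReflTransGen.single hstep)
      have hσeq : σ i = σ j := congrArg p hmk
      rw [← hσeq]; exact gSame hP (σ i)
    · have hstep : R (i, true) (j, false) := by
        refine ⟨hij, by simpa using hQ, fun hg => hP ?_⟩
        simpa using hg
      have hmk : Quotient.mk S (i, true) = Quotient.mk S (j, false) :=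
        Quotient.sound (Relation.ReflTransGen.single hstep)
      have hσeq : σ i = !(σ j) := by
        have h2 : Quotient.mk S ((j, false) : Fin k × Bool) = f (Quotient.mk S (j, true)) := rfl
        rw [hσdef]
        simp only [hmk, h2, hp]
      rw [hσeq]
      have := gDiff hQ (!(σ j))
      simpa using this
    · exact absurd (hPQ i j hij) (by simp [hP, hQ])
  -- assemble the answer
  refine ⟨fun i => ptAux u0 v0 i (σ i), fun i => ptAux u0 v0 i (!(σ i)), ?_, ?_, ?_, ?_⟩
  · rintro (i | i) (j | j) hxy <;> simp only [Sum.elim_inl, Sum.elim_inr] at hxy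
    · by_cases hij : i = j
      · rw [hij]
      · exact absurd hxy (hptdisj i j hij _ _)
    · by_cases hij : i = j
      · subst hij
        exact absurd hxy (hadjpt i (σ i)).ne
      · exact absurd hxy (hptdisj i j hij _ _)
    · by_cases hij : i = j
      · subst hij
        exact absurd hxy.symm (hadjpt i (σ i)).ne
      · exact absurd hxy (hptdisj i j hij _ _)
    · by_cases hij : i = j
      · rw [hij]
      · exact absurd hxy (hptdisj i j hij _ _)
  · intro i
    show e i = s(ptAux u0 v0 i (σ i), ptAux u0 v0 i (!(σ i)))
    cases hσi : σ i
    · rw [show ptAux u0 v0 i false = v0 i from rfl,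
        show ptAux u0 v0 i (!false) = u0 i from rfl, he' i, Sym2.eq_swap]
    · rw [show ptAux u0 v0 i true = u0 i from rfl,
        show ptAux u0 v0 i (!true) = v0 i from rfl]
      exact he' i
  · intro i
    exact hadjpt i (σ i)
  · intro i j hij
    exact ⟨(hσ i j hij).1, (hσ i j hij).2⟩
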